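/- Linnik's identity: for every integer n ≥ 2, Λ(n)/log n = ∑_{k ≥ 1} ((−1)^{k+1}/k) · τ'_k(n), where the sum is finite since τ'_k(n) = 0 for k > log n / log 2. -/

import Mathlib

/-- `τ'_k(n)`: the number of ordered `k`-tuples `(n₁, …, n_k)` of integers with
each `n_i ≥ 2` and `n₁ ⋯ n_k = n`. -/
noncomputable def tau' (k n : ℕ) : ℕ :=
  Nat.card {f : Fin k → ℕ // (∀ i, 2 ≤ f i) ∧ ∏ i, f i = n}

open Finset ArithmeticFunction

lemma tau'_bound {k n : ℕ} (f : Fin k → ℕ) (hf : ∀ i, 2 ≤ f i) (hp : ∏ i, f i = n)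
    (i : Fin k) : f i < n + 2 := by
  rcases Nat.eq_zero_or_pos n with rfl | hn
  · obtain ⟨j, -, hj⟩ := Finset.prod_eq_zero_iff.mp hp
    have := hf j; omega
  · have hd : f i ∣ n := hp ▸ Finset.dvd_prod_of_mem f (Finset.mem_univ i)
    have := Nat.le_of_dvd hn hd
    omega

lemma tau'_finite (k n : ℕ) : Finite {f : Fin k → ℕ // (∀ i, 2 ≤ f i) ∧ ∏ i, f i = n} := by
  have hinj : Function.Injective
      (fun f : {f : Fin k → ℕ // (∀ i, 2 ≤ f i) ∧ ∏ i, f i = n} =>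
        (fun i => (⟨f.1 i, tau'_bound f.1 f.2.1 f.2.2 i⟩ : Fin (n+2)))) := by
    rintro ⟨f, hf⟩ ⟨g, hg⟩ h
    ext i
    exact congrArg Fin.val (congrFun h i)
  exact Finite.of_injective _ hinj

lemma tau'_zero (n : ℕ) : tau' 0 n = if n = 1 then 1 else 0 := by
  unfold tau'
  split
  · subst n
    rw [Nat.card_eq_one_iff_unique]
    constructor
    · constructor
      rintro ⟨f, -, -⟩ ⟨g, -, -⟩
      ext i
      exact absurd i.2 (by omega)
    · exact ⟨⟨![], by simp, by simp⟩⟩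
  · rw [Nat.card_eq_zero]
    left
    constructor
    rintro ⟨f, -, hp⟩
    simp at hp
    omega

lemma tau'_eq_zero_of_lt {k n : ℕ} (h : n < 2 ^ k) : tau' k n = 0 := by
  unfold tau'
  rw [Nat.card_eq_zero]
  left
  constructor
  rintro ⟨f, hf, hp⟩
  have : (2 : ℕ) ^ k ≤ ∏ i, f i := by
    calc (2:ℕ)^k = ∏ _i : Fin k, 2 := by simp
    _ ≤ ∏ i, f i := Finset.prod_le_prod' fun i _ => hf i
  omega

lemma tau'_n_zero (k : ℕ) : tau' k 0 = 0 := by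
  rw [tau', Nat.card_eq_zero]
  left
  constructor
  rintro ⟨f, hf, hp⟩
  obtain ⟨j, -, hj⟩ := Finset.prod_eq_zero_iff.mp hp
  have := hf j; omega

lemma my_card_sigma {ι : Type*} [Fintype ι] (f : ι → Type*) [∀ i, Finite (f i)] :
    Nat.card (Σ i, f i) = ∑ i, Nat.card (f i) := by
  classical
  letI : ∀ i, Fintype (f i) := fun i => Fintype.ofFinite _
  simp [Nat.card_eq_fintype_card, Fintype.card_sigma]

set_option maxHeartbeats 1000000 in
lemma tau'_succ (k n : ℕ) :
    tau' (k+1) n = ∑ de ∈ n.divisorsAntidiagonal, if 2 ≤ de.1 then tau' k de.2 else 0 := by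
  classical
  rcases Nat.eq_zero_or_pos n with rfl | hn
  · simp [tau'_n_zero]
  · have e : {f : Fin (k+1) → ℕ // (∀ i, 2 ≤ f i) ∧ ∏ i, f i = n}
        ≃ Σ de : n.divisorsAntidiagonal,
            {f : Fin k → ℕ // (2 ≤ (de : ℕ × ℕ).1 ∧ (∀ i, 2 ≤ f i)) ∧ ∏ i, f i = (de : ℕ × ℕ).2} := by
      refine ⟨fun p => ⟨⟨(p.1 0, ∏ i : Fin k, p.1 i.succ), ?_⟩,
          ⟨fun i : Fin k => p.1 i.succ, ⟨p.2.1 0, fun i : Fin k => p.2.1 i.succ⟩, rfl⟩⟩,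
        fun p => ⟨Fin.cons p.1.1.1 p.2.1, ?_, ?_⟩, ?_, ?_⟩
      · rw [Nat.mem_divisorsAntidiagonal]
        exact ⟨(Fin.prod_univ_succ p.1).symm.trans p.2.2, hn.ne'⟩
      · intro i
        refine Fin.cases ?_ ?_ i
        · simpa using p.2.2.1.1
        · intro j; simpa using p.2.2.1.2 j
      · rw [Fin.prod_cons, p.2.2.2]
        exact (Nat.mem_divisorsAntidiagonal.mp p.1.2).1
      · rintro ⟨f, hf⟩
        ext i
        exact congrFun (Fin.cons_self_tail f) i
      · rintro ⟨⟨⟨d, m⟩, hdm⟩, g, hg1, hg2⟩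
        refine Sigma.ext (Subtype.ext ?_) ?_
        · simp only [Fin.cons_zero, Fin.cons_succ]
          exact Prod.ext rfl hg2
        · rw [Subtype.heq_iff_coe_eq]
          · funext i
            simp [Fin.cons_succ]
          · intro f
            simp only [Fin.cons_zero, Fin.cons_succ]
            rw [hg2]
    haveI : ∀ de : n.divisorsAntidiagonal,
        Finite {f : Fin k → ℕ // (2 ≤ (de : ℕ × ℕ).1 ∧ (∀ i, 2 ≤ f i)) ∧ ∏ i, f i = (de : ℕ × ℕ).2} := by
      intro de
      haveI := tau'_finite k (de : ℕ × ℕ).2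
      exact Finite.of_injective
        (fun f : {f : Fin k → ℕ // (2 ≤ (de : ℕ × ℕ).1 ∧ (∀ i, 2 ≤ f i)) ∧ ∏ i, f i = (de : ℕ × ℕ).2} =>
          (⟨f.1, f.2.1.2, f.2.2⟩ : {f : Fin k → ℕ // (∀ i, 2 ≤ f i) ∧ ∏ i, f i = (de : ℕ × ℕ).2}))
        (by rintro ⟨f, hf⟩ ⟨g, hg⟩ h; simpa using congrArg Subtype.val h)
    rw [tau', Nat.card_congr e, my_card_sigma,
      ← Finset.sum_coe_sort n.divisorsAntidiagonal (fun de => if 2 ≤ de.1 then tau' k de.2 else 0)]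
    refine Fintype.sum_congr _ _ ?_
    rintro ⟨⟨d, m⟩, hdm⟩
    by_cases hd : 2 ≤ d
    · rw [if_pos hd, tau']
      exact Nat.card_congr ⟨fun f => ⟨f.1, f.2.1.2, f.2.2⟩, fun f => ⟨f.1, ⟨hd, f.2.1⟩, f.2.2⟩,
        fun f => rfl, fun f => rfl⟩
    · rw [if_neg hd, Nat.card_eq_zero]
      left
      exact ⟨fun f => hd f.2.1.1⟩


noncomputable def tfun : ArithmeticFunction ℝ :=
  ⟨fun n => if 2 ≤ n then 1 else 0, by norm_num⟩

lemma tfun_apply (n : ℕ) : tfun n = if 2 ≤ n then 1 else 0 := rfl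

lemma tfun_pow_apply (k n : ℕ) : (tfun ^ k) n = (tau' k n : ℝ) := by
  induction k generalizing n with
  | zero =>
    rw [pow_zero, tau'_zero]
    rcases eq_or_ne n 1 with rfl | h
    · simp
    · simp [ArithmeticFunction.one_apply, h]
  | succ k ih =>
    rw [pow_succ', ArithmeticFunction.mul_apply, tau'_succ, Nat.cast_sum]
    refine Finset.sum_congr rfl ?_
    rintro ⟨d, m⟩ hdm
    rw [ih, tfun_apply]
    split <;> simp

lemma finsum_apply' {ι : Type*} (s : Finset ι) (F : ι → ArithmeticFunction ℝ) (n : ℕ) :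
    (∑ i ∈ s, F i) n = ∑ i ∈ s, (F i) n := by
  induction s using Finset.cons_induction with
  | empty => simp
  | cons a s ha ih => rw [Finset.sum_cons, ArithmeticFunction.add_apply, ih, Finset.sum_cons]

lemma sub_apply'' (f g : ArithmeticFunction ℝ) (n : ℕ) : (f - g) n = f n - g n := by
  have h := congrArg (fun h : ArithmeticFunction ℝ => h n) (sub_add_cancel f g)
  simp only [ArithmeticFunction.add_apply] at h
  linarith

lemma neg_apply'' (f : ArithmeticFunction ℝ) (n : ℕ) : (-f) n = -(f n) := by
  have h := congrArg (fun h : ArithmeticFunction ℝ => h n) (neg_add_cancel f)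
  simp only [ArithmeticFunction.add_apply, ArithmeticFunction.zero_apply] at h
  linarith

lemma nsmul_apply' (k : ℕ) (f : ArithmeticFunction ℝ) (n : ℕ) : (k • f) n = k * f n := by
  induction k with
  | zero => simp
  | succ k ih => rw [succ_nsmul, ArithmeticFunction.add_apply, ih]; push_cast; ring

lemma log_pmul_mul (f g : ArithmeticFunction ℝ) :
    ArithmeticFunction.log.pmul (f * g)
      = (ArithmeticFunction.log.pmul f) * g + f * (ArithmeticFunction.log.pmul g) := by
  ext n
  simp only [ArithmeticFunction.pmul_apply, ArithmeticFunction.mul_apply,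
    ArithmeticFunction.add_apply, ArithmeticFunction.log_apply, Finset.mul_sum,
    ← Finset.sum_add_distrib]
  refine Finset.sum_congr rfl ?_
  rintro ⟨d, m⟩ hdm
  obtain ⟨hprod, hn0⟩ := Nat.mem_divisorsAntidiagonal.mp hdm
  have hd : d ≠ 0 := by rintro rfl; omega
  have hm : m ≠ 0 := by rintro rfl; omega
  rw [← hprod, Nat.cast_mul,
    Real.log_mul (by exact_mod_cast hd) (by exact_mod_cast hm)]
  ring

lemma log_pmul_tfun : ArithmeticFunction.log.pmul tfun = ArithmeticFunction.log := by
  ext n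
  rw [ArithmeticFunction.pmul_apply, tfun_apply, ArithmeticFunction.log_apply]
  rcases n with _ | _ | n
  · simp
  · simp
  · norm_num

lemma log_pmul_pow (k : ℕ) :
    ArithmeticFunction.log.pmul (tfun ^ (k+1))
      = (k+1) • (ArithmeticFunction.log.pmul tfun * tfun ^ k) := by
  induction k with
  | zero => simp
  | succ k ih =>
    rw [pow_succ' tfun (k+1), log_pmul_mul, ih, mul_smul_comm,
      show tfun * (ArithmeticFunction.log.pmul tfun * tfun ^ k)
        = ArithmeticFunction.log.pmul tfun * tfun ^ (k+1) by rw [pow_succ']; ring,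
      succ_nsmul (ArithmeticFunction.log.pmul tfun * tfun ^ (k+1)) (k+1)]
    abel

lemma one_add_tfun : 1 + tfun = (ArithmeticFunction.zeta : ArithmeticFunction ℝ) := by
  ext n
  rw [ArithmeticFunction.add_apply, ArithmeticFunction.one_apply, tfun_apply,
    ArithmeticFunction.natCoe_apply, ArithmeticFunction.zeta_apply]
  rcases n with _ | _ | n <;> norm_num

lemma geom_tfun (K : ℕ) :
    (1 + tfun) * (∑ j ∈ Finset.range K, (-tfun) ^ j) = 1 - (-tfun) ^ K := by
  have h := geom_sum_mul (-tfun) K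
  linear_combination -h

lemma neg_pow_apply (f : ArithmeticFunction ℝ) (j n : ℕ) :
    ((-f) ^ j) n = (-1 : ℝ) ^ j * (f ^ j) n := by
  rcases Nat.even_or_odd j with h | h
  · rw [h.neg_one_pow, one_mul, show (-f)^j = f^j from h.neg_pow f]
  · rw [h.neg_one_pow, show (-f)^j = -(f^j) from h.neg_pow f, neg_one_mul, neg_apply'']

lemma mul_neg_pow_apply (g f : ArithmeticFunction ℝ) (j n : ℕ) :
    (g * (-f) ^ j) n = (-1 : ℝ) ^ j * ((g * f ^ j) n) := by
  rcases Nat.even_or_odd j with h | h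
  · rw [h.neg_one_pow, one_mul, show (-f)^j = f^j from h.neg_pow f]
  · rw [h.neg_one_pow,
      show g * (-f)^j = -(g * f^j) by rw [show (-f)^j = -(f^j) from h.neg_pow f]; exact mul_neg g _,
      neg_one_mul, neg_apply'']

/-- **Linnik's identity**: for every integer `n ≥ 2`,
`Λ(n)/log n = ∑_{k ≥ 1} ((−1)^{k+1}/k) · τ'_k(n)` (the sum is finite since
`τ'_k(n) = 0` for `k > log n / log 2`; the `k = 0` term below vanishes since
`τ'_0(n) = 0` for `n ≥ 2`). -/
theorem linnik_identity (n : ℕ) (hn : 2 ≤ n) :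
    ArithmeticFunction.vonMangoldt n / Real.log n
      = ∑' k : ℕ, ((-1 : ℝ) ^ (k + 1) / k) * tau' k n := by
  have hn0 : n ≠ 0 := by omega
  set K := n + 1 with hK
  have hpow : ∀ m ≤ n, ∀ k, K ≤ k → tau' k m = 0 := by
    intro m hm k hk
    refine tau'_eq_zero_of_lt ?_
    have h1 : n < 2 ^ n := Nat.lt_two_pow_self
    have h2 : 2 ^ n ≤ 2 ^ k := Nat.pow_le_pow_right (by norm_num) (by omega)
    omega
  have hsupp : ∀ k ∉ Finset.range (K + 1), ((-1:ℝ)^(k+1)/k) * tau' k n = 0 := by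
    intro k hk
    rw [Finset.mem_range, not_lt] at hk
    rw [hpow n le_rfl k (by omega), Nat.cast_zero, mul_zero]
  rw [tsum_eq_sum hsupp]
  have hlog : Real.log n ≠ 0 := by
    have h1 : (1:ℝ) < n := by exact_mod_cast hn
    exact (Real.log_pos h1).ne'
  rw [div_eq_iff hlog]
  set G : ArithmeticFunction ℝ := ∑ j ∈ Finset.range K, (-tfun) ^ j with hG
  have hz : (ArithmeticFunction.vonMangoldt * (-tfun) ^ K) n = 0 := by
    rw [ArithmeticFunction.mul_apply]
    refine Finset.sum_eq_zero ?_
    rintro ⟨d, m⟩ hdm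
    obtain ⟨hprod, -⟩ := Nat.mem_divisorsAntidiagonal.mp hdm
    have hm : m ≤ n := Nat.le_of_dvd (by omega) ⟨d, by rw [← hprod]; ring⟩
    have hzm : ((-tfun) ^ K) m = 0 := by
      rw [neg_pow_apply, tfun_pow_apply, hpow m hm K le_rfl]
      simp
    rw [hzm, mul_zero]
  have hlogG : (ArithmeticFunction.log * G) n = ArithmeticFunction.vonMangoldt n := by
    have h3 : ArithmeticFunction.log * G
        = ArithmeticFunction.vonMangoldt - ArithmeticFunction.vonMangoldt * (-tfun) ^ K := by
      calc ArithmeticFunction.log * G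
          = (ArithmeticFunction.vonMangoldt * ArithmeticFunction.zeta) * G := by
            rw [ArithmeticFunction.vonMangoldt_mul_zeta]
        _ = ArithmeticFunction.vonMangoldt * ((1 + tfun) * G) := by
            rw [one_add_tfun]; ring
        _ = ArithmeticFunction.vonMangoldt * (1 - (-tfun) ^ K) := by rw [geom_tfun]
        _ = ArithmeticFunction.vonMangoldt - ArithmeticFunction.vonMangoldt * (-tfun) ^ K := by
            ring
    rw [h3, sub_apply'', hz, sub_zero]
  have hterm : ∀ j, (((-1:ℝ)^(j+1+1)/((j+1:ℕ):ℝ)) * (tau' (j+1) n : ℝ)) * Real.log n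
      = (ArithmeticFunction.log * (-tfun) ^ j) n := by
    intro j
    have e1 : Real.log n * (tau' (j+1) n : ℝ)
        = ((j:ℝ)+1) * ((ArithmeticFunction.log * tfun ^ j) n) := by
      have h := congrArg (fun f : ArithmeticFunction ℝ => f n) (log_pmul_pow j)
      simp only [ArithmeticFunction.pmul_apply, nsmul_apply', tfun_pow_apply,
        log_pmul_tfun, ArithmeticFunction.log_apply] at h
      push_cast at h
      linarith [h]
    rw [mul_neg_pow_apply]
    have hj : ((j:ℝ)+1) ≠ 0 := by positivity
    have e1' : (tau' (j+1) n : ℝ) * Real.log n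
        = ((j:ℝ)+1) * ((ArithmeticFunction.log * tfun ^ j) n) := by
      rw [mul_comm]; exact e1
    push_cast
    rw [mul_assoc, e1']
    field_simp
    ring
  have hsum : (∑ k ∈ Finset.range (K+1), ((-1:ℝ)^(k+1)/k) * tau' k n) * Real.log n
      = ArithmeticFunction.vonMangoldt n := by
    rw [Finset.sum_range_succ']
    have h0 : ((-1:ℝ)^(0+1)/((0:ℕ):ℝ)) * (tau' 0 n : ℝ) = 0 := by norm_num
    rw [h0, add_zero, Finset.sum_mul]
    calc ∑ j ∈ Finset.range K, (((-1:ℝ)^(j+1+1)/((j+1:ℕ):ℝ)) * (tau' (j+1) n : ℝ)) * Real.log n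
        = ∑ j ∈ Finset.range K, (ArithmeticFunction.log * (-tfun) ^ j) n :=
          Finset.sum_congr rfl fun j _ => hterm j
      _ = (ArithmeticFunction.log * G) n := by rw [hG, Finset.mul_sum, finsum_apply']
      _ = ArithmeticFunction.vonMangoldt n := hlogG
  exact hsum.symm
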